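/- Let t be a group automorphism of ℤⁿ and X = GAlex(ℤⁿ, t). Then for all x, y, z ∈ ℤⁿ one has z · (s_x s_y^{-1}) = z + (1 − t^{-1})(y − x), and the displacement group Dis(X) is isomorphic to the subgroup (1 − t^{-1})ℤⁿ of ℤⁿ, acting by translations. -/

import Mathlib

/-- The point symmetry `s_y : z ↦ t(z − y) + y` of `GAlex(ℤⁿ, t)` (written
additively). -/
def aSymm {n : ℕ} (t : AddAut (Fin n → ℤ)) (y : Fin n → ℤ) :
    Equiv.Perm (Fin n → ℤ) :=
  (Equiv.addRight (-y)).trans (t.toEquiv.trans (Equiv.addRight y))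

/-- The displacement group of `GAlex(ℤⁿ, t)`. -/
def aDis {n : ℕ} (t : AddAut (Fin n → ℤ)) : Subgroup (Equiv.Perm (Fin n → ℤ)) :=
  Subgroup.closure {g | ∃ x y : Fin n → ℤ, g = (aSymm t y)⁻¹ * aSymm t x}

/-- Translations by `(1 - t⁻¹) v` as a monoid hom. -/
def aTrans {n : ℕ} (t : AddAut (Fin n → ℤ)) :
    Multiplicative (Fin n → ℤ) →* Equiv.Perm (Fin n → ℤ) where
  toFun v := Equiv.addRight ((v.toAdd : Fin n → ℤ) - (-t) v.toAdd)
  map_one' := by ext z; simp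
  map_mul' a b := by
    ext z
    simp [Equiv.Perm.mul_apply, map_add]
    abel

theorem aSymm_key {n : ℕ} (t : AddAut (Fin n → ℤ)) (x y z : Fin n → ℤ) :
    ((aSymm t y)⁻¹ * aSymm t x) z = z + ((y - x) - (-t) (y - x)) := by
  rw [Equiv.Perm.mul_apply, Equiv.Perm.inv_def, Equiv.symm_apply_eq]
  simp only [aSymm, Equiv.trans_apply, Equiv.coe_addRight]
  have h : ⇑t.toEquiv = ⇑t := rfl
  simp only [h, map_add, map_neg, map_sub, AddAut.neg_apply_self, AddAut.apply_neg_self]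
  abel

theorem stmt17 {n : ℕ} (t : AddAut (Fin n → ℤ)) :
    (∀ x y z : Fin n → ℤ,
      ((aSymm t y)⁻¹ * aSymm t x) z = z + ((y - x) - (-t) (y - x))) ∧
    (aDis t : Set (Equiv.Perm (Fin n → ℤ))) =
      Set.range (fun v : Fin n → ℤ =>
        (Equiv.addRight (v - (-t) v) : Equiv.Perm (Fin n → ℤ))) := by
  refine ⟨aSymm_key t, ?_⟩
  have hS : {g | ∃ x y : Fin n → ℤ, g = (aSymm t y)⁻¹ * aSymm t x} =
      Set.range (fun v : Fin n → ℤ =>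
        (Equiv.addRight (v - (-t) v) : Equiv.Perm (Fin n → ℤ))) := by
    ext g
    constructor
    · rintro ⟨x, y, rfl⟩
      exact ⟨y - x, (Equiv.ext fun z => (aSymm_key t x y z).symm)⟩
    · rintro ⟨v, rfl⟩
      refine ⟨0, v, Equiv.ext fun z => ?_⟩
      rw [aSymm_key]
      simp
  have hR : Set.range (fun v : Fin n → ℤ =>
        (Equiv.addRight (v - (-t) v) : Equiv.Perm (Fin n → ℤ))) =
      ((aTrans t).range : Set (Equiv.Perm (Fin n → ℤ))) := by
    rw [MonoidHom.coe_range]; rfl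
  rw [aDis, hS, hR, Subgroup.closure_eq]
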